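/- Let n ≥ 1, let v ∈ ℝⁿ be a nonzero vector, and let s ≥ 1 be an integer. Then the stochastic quantization Q_s(v) satisfies the variance bound E[‖Q_s(v) − v‖₂²] ≤ min(n/s², √n/s) · ‖v‖₂². -/

import Mathlib

open MeasureTheory ProbabilityTheory

/-- `Qv` is (a realization on the probability space `(Ω, μ)` of) the stochastic
quantization `Q_s(v)` of the nonzero vector `v ∈ ℝⁿ` with `s` quantization levels:
`Q_s(v)_i = ‖v‖₂ · sgn(vᵢ) · ξᵢ`, where the `ξᵢ` are independent, and, with
`aᵢ = |vᵢ|/‖v‖₂` and `ℓᵢ ∈ {0, …, s−1}` such that `aᵢ ∈ [ℓᵢ/s, (ℓᵢ+1)/s]`, `ξᵢ` takes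
the value `(ℓᵢ+1)/s` with probability `pᵢ = aᵢ·s − ℓᵢ` and `ℓᵢ/s` with probability
`1 − pᵢ`. -/
def IsStochQuant {n : ℕ} (s : ℕ) {Ω : Type*} [MeasurableSpace Ω] (μ : Measure Ω)
    (v : EuclideanSpace ℝ (Fin n)) (Qv : Ω → EuclideanSpace ℝ (Fin n)) : Prop :=
  ∃ (ξ : Fin n → Ω → ℝ) (ℓ : Fin n → ℕ),
    (∀ i, Measurable (ξ i)) ∧
    iIndepFun ξ μ ∧
    (∀ i, ℓ i ≤ s - 1) ∧
    (∀ i, (ℓ i : ℝ) / s ≤ |v i| / ‖v‖ ∧ |v i| / ‖v‖ ≤ ((ℓ i : ℝ) + 1) / s) ∧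
    (∀ i, μ {ω | ξ i ω = ((ℓ i : ℝ) + 1) / s} =
        ENNReal.ofReal (|v i| / ‖v‖ * s - ℓ i)) ∧
    (∀ i, μ {ω | ξ i ω = (ℓ i : ℝ) / s} =
        1 - ENNReal.ofReal (|v i| / ‖v‖ * s - ℓ i)) ∧
    (∀ ω i, Qv ω i = ‖v‖ * (if 0 ≤ v i then (1 : ℝ) else -1) * ξ i ω)

lemma two_point_integral {Ω : Type*} [MeasurableSpace Ω] (μ : Measure Ω) [IsProbabilityMeasure μ]
    (ξ : Ω → ℝ) (hξ : Measurable ξ) (lo hi a p : ℝ) (hne : lo ≠ hi)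
    (hp0 : 0 ≤ p) (hp1 : p ≤ 1)
    (hhi : μ {ω | ξ ω = hi} = ENNReal.ofReal p)
    (hlo : μ {ω | ξ ω = lo} = 1 - ENNReal.ofReal p) :
    Integrable (fun ω => (ξ ω - a)^2) μ ∧
    ∫ ω, (ξ ω - a)^2 ∂μ = p * (hi - a)^2 + (1-p) * (lo - a)^2 := by
  set A : Set Ω := {ω | ξ ω = hi} with hA
  set B : Set Ω := {ω | ξ ω = lo} with hB
  have hAm : MeasurableSet A := hξ (measurableSet_singleton hi)
  have hBm : MeasurableSet B := hξ (measurableSet_singleton lo)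
  have hdisj : Disjoint A B := by
    rw [Set.disjoint_left]
    intro ω h1 h2
    have h1' : ξ ω = hi := h1
    have h2' : ξ ω = lo := h2
    exact hne (h2'.symm.trans h1')
  have hle : ENNReal.ofReal p ≤ 1 := by
    simpa using ENNReal.ofReal_le_ofReal hp1
  have hunion : μ (A ∪ B) = 1 := by
    rw [measure_union (hdisj) hBm, hhi, hlo, add_tsub_cancel_of_le hle]
  have hcompl : μ (A ∪ B)ᶜ = 0 := by
    rw [measure_compl (hAm.union hBm) (measure_ne_top μ _), hunion, measure_univ, tsub_self]
  set f : Ω → ℝ := A.indicator (fun _ => (hi - a)^2) + B.indicator (fun _ => (lo - a)^2) with hf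
  have hfae : (fun ω => (ξ ω - a)^2) =ᵐ[μ] f := by
    refine (ae_iff.2 ?_)
    refine measure_mono_null (fun ω hω => ?_) hcompl
    simp only [Set.mem_compl_iff, Set.mem_union]
    rintro (h | h)
    · -- ω ∈ A
      apply hω
      have h' : ξ ω = hi := h
      have hωB : ω ∉ B := fun h2 => hne ((show ξ ω = lo from h2).symm.trans h')
      simp [hf, Set.indicator_of_mem h, Set.indicator_of_notMem hωB, h']
    · apply hω
      have h' : ξ ω = lo := h
      have hωA : ω ∉ A := fun h2 => hne (h'.symm.trans (show ξ ω = hi from h2))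
      simp [hf, Set.indicator_of_mem h, Set.indicator_of_notMem hωA, h']
  have hfint : Integrable f μ :=
    ((integrable_const _).indicator hAm).add ((integrable_const _).indicator hBm)
  have hint : Integrable (fun ω => (ξ ω - a)^2) μ := hfint.congr hfae.symm
  refine ⟨hint, ?_⟩
  rw [integral_congr_ae hfae, hf]
  simp only [Pi.add_apply]
  rw [integral_add ((integrable_const _).indicator hAm) ((integrable_const _).indicator hBm),
    integral_indicator_const _ hAm, integral_indicator_const _ hBm, measureReal_def, measureReal_def, hhi, hlo,
    ENNReal.toReal_ofReal hp0]
  have : (1 - ENNReal.ofReal p).toReal = 1 - p := by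
    rw [ENNReal.toReal_sub_of_le hle ENNReal.one_ne_top]
    simp [ENNReal.toReal_ofReal hp0]
  rw [this]
  simp [smul_eq_mul]


/-- **Variance bound for stochastic quantization:**
`E[‖Q_s(v) − v‖₂²] ≤ min(n/s², √n/s) · ‖v‖₂²`. -/
theorem stochQuant_variance_bound {n : ℕ} (hn : 1 ≤ n)
    (v : EuclideanSpace ℝ (Fin n)) (hv : v ≠ 0) (s : ℕ) (hs : 1 ≤ s)
    {Ω : Type*} [MeasurableSpace Ω] (μ : Measure Ω) [IsProbabilityMeasure μ]
    (Qv : Ω → EuclideanSpace ℝ (Fin n)) (hQ : IsStochQuant s μ v Qv) :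
    ∫ ω, ‖Qv ω - v‖ ^ 2 ∂μ ≤
      min ((n : ℝ) / s ^ 2) (Real.sqrt n / s) * ‖v‖ ^ 2 := by
  obtain ⟨ξ, ℓ, hmeas, _hindep, _hℓ, haℓ, phi, plo, hQv⟩ := hQ
  have hvn : (0:ℝ) < ‖v‖ := norm_pos_iff.2 hv
  have hs0 : (0:ℝ) < s := by exact_mod_cast hs
  set a : Fin n → ℝ := fun i => |v i| / ‖v‖ with ha
  set p : Fin n → ℝ := fun i => a i * s - ℓ i with hp
  have ha0 : ∀ i, 0 ≤ a i := fun i => div_nonneg (abs_nonneg _) hvn.le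
  have hp0 : ∀ i, 0 ≤ p i := by
    intro i
    have h := (haℓ i).1
    rw [div_le_iff₀ hs0] at h
    simp only [hp, sub_nonneg]
    linarith [h]
  have hp1 : ∀ i, p i ≤ 1 := by
    intro i
    have h := (haℓ i).2
    rw [le_div_iff₀ hs0] at h
    simp only [hp]
    linarith [h]
  have hpa : ∀ i, p i ≤ a i * s := by
    intro i
    simp only [hp]
    have : (0:ℝ) ≤ (ℓ i : ℝ) := Nat.cast_nonneg _
    linarith
  have key : ∀ i, Integrable (fun ω => (ξ i ω - a i)^2) μ ∧
      ∫ ω, (ξ i ω - a i)^2 ∂μ = p i * (1 - p i) / s^2 := by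
    intro i
    have hsne : (s:ℝ) ≠ 0 := ne_of_gt hs0
    have hne : ((ℓ i : ℝ)) / s ≠ ((ℓ i : ℝ) + 1) / s := by
      intro h
      rw [div_eq_div_iff hsne hsne] at h
      nlinarith [hs0]
    have hhi : μ {ω | ξ i ω = ((ℓ i : ℝ) + 1) / s} = ENNReal.ofReal (p i) := by
      rw [phi i]
    have hlo : μ {ω | ξ i ω = ((ℓ i : ℝ)) / s} = 1 - ENNReal.ofReal (p i) := by
      rw [plo i]
    obtain ⟨hint, heq⟩ := two_point_integral μ (ξ i) (hmeas i) _ _ (a i) (p i) hne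
      (hp0 i) (hp1 i) hhi hlo
    refine ⟨hint, ?_⟩
    rw [heq]
    have h1 : ((ℓ i:ℝ)+1)/s - a i = (1 - p i)/s := by
      field_simp [hp]
      ring
    have h2 : ((ℓ i:ℝ))/s - a i = -(p i)/s := by
      field_simp [hp]
      ring
    rw [h1, h2]
    field_simp
    ring
  have hnorm : ∀ ω, ‖Qv ω - v‖^2 = ∑ i, ‖v‖^2 * (ξ i ω - a i)^2 := by
    intro ω
    rw [EuclideanSpace.norm_eq, Real.sq_sqrt (by positivity)]
    refine Finset.sum_congr rfl fun i _ => ?_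
    have hsub : (Qv ω - v) i = Qv ω i - v i := rfl
    rw [hsub, hQv ω i, Real.norm_eq_abs, sq_abs]
    have hva : |v i| = ‖v‖ * a i := by
      simp only [ha]
      field_simp
    by_cases h : 0 ≤ v i
    · have : v i = |v i| := (abs_of_nonneg h).symm
      rw [if_pos h]
      rw [this, hva]
      ring
    · have : v i = -|v i| := by rw [abs_of_neg (not_le.1 h)]; ring
      rw [if_neg h, this, hva]
      ring
  have hS : ∫ ω, ‖Qv ω - v‖ ^ 2 ∂μ = ‖v‖^2 * ∑ i, p i * (1 - p i) / s^2 := by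
    simp_rw [hnorm]
    rw [integral_finset_sum _ (fun i _ => ((key i).1.const_mul _))]
    rw [Finset.mul_sum]
    refine Finset.sum_congr rfl fun i _ => ?_
    rw [integral_const_mul, (key i).2]
  rw [hS, mul_comm]
  have hsum2 : (0:ℝ) ≤ ‖v‖^2 := by positivity
  refine mul_le_mul_of_nonneg_right ?_ hsum2
  refine le_min ?_ ?_
  · -- ∑ ≤ n / s²
    calc ∑ i, p i * (1 - p i) / s^2 ≤ ∑ _i : Fin n, (1:ℝ) / (s:ℝ)^2 := by
          refine Finset.sum_le_sum fun i _ => ?_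
          have h0 := hp0 i
          have h1 := hp1 i
          gcongr
          nlinarith
      _ = (n:ℝ) / s^2 := by
          rw [Finset.sum_const, Finset.card_univ, Fintype.card_fin, nsmul_eq_mul]
          ring
  · -- ∑ ≤ √n / s
    have hterm : ∀ i, p i * (1 - p i) / s^2 ≤ a i / s := by
      intro i
      have h0 := hp0 i
      have h1 := hp1 i
      have h2 := hpa i
      rw [div_le_div_iff₀ (by positivity) hs0]
      have hple : p i * (1 - p i) ≤ p i := by nlinarith
      nlinarith [mul_le_mul_of_nonneg_right hple hs0.le,
        mul_le_mul_of_nonneg_right h2 hs0.le]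
    calc ∑ i, p i * (1 - p i) / s^2 ≤ ∑ i, a i / s :=
          Finset.sum_le_sum fun i _ => hterm i
      _ = (∑ i, |v i|) / (‖v‖ * s) := by
          rw [Finset.sum_div]
          refine Finset.sum_congr rfl fun i _ => ?_
          simp only [ha]
          rw [div_div]
      _ ≤ Real.sqrt n / s := by
          rw [div_le_div_iff₀ (by positivity) hs0]
          have hcs : (∑ i, |v i|)^2 ≤ (n:ℝ) * ∑ i, |v i|^2 := by
            have := sq_sum_le_card_mul_sum_sq (s := Finset.univ) (f := fun i : Fin n => |v i|)
            simpa [Finset.card_univ] using this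
          have hnv : ∑ i, |v i|^2 = ‖v‖^2 := by
            rw [EuclideanSpace.norm_eq, Real.sq_sqrt (by positivity)]
            refine Finset.sum_congr rfl fun i _ => ?_
            rw [Real.norm_eq_abs]
          have h1 : ∑ i, |v i| ≤ Real.sqrt n * ‖v‖ := by
            have h2 : (∑ i, |v i|)^2 ≤ (Real.sqrt n * ‖v‖)^2 := by
              rw [mul_pow, Real.sq_sqrt (Nat.cast_nonneg n)]
              rw [← hnv]
              exact hcs
            have h3 : (0:ℝ) ≤ Real.sqrt n * ‖v‖ := by positivity
            nlinarith [Finset.sum_nonneg fun i (_ : i ∈ Finset.univ) => abs_nonneg (v i)]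
          calc (∑ i, |v i|) * s ≤ (Real.sqrt n * ‖v‖) * s := by
                exact mul_le_mul_of_nonneg_right h1 hs0.le
            _ = Real.sqrt n * (‖v‖ * s) := by ring
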